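/- Spectral stability of a gapped Hamiltonian under a relatively bounded block-diagonal term plus a small perturbation: Let E be a finite-dimensional complex inner product space. Let H₀ be a positive-semidefinite self-adjoint operator on E, let P be the orthogonal projection onto the kernel of H₀, with rank P = K, and suppose ⟨ψ, H₀ψ⟩ ≥ ‖(I − P)ψ‖² for all ψ ∈ E (i.e., the spectrum of H₀ is contained in {0} ∪ [1, ∞)). Let D be self-adjoint with ‖Dψ‖ ≤ δ·‖H₀ψ‖ for all ψ ∈ E, where δ ≤ 1/3, and let V be self-adjoint with ‖V‖ ≤ ε_*, where ε_* ≤ 1/18. Then: (i) every eigenvalue of H := H₀ + D + V lies in [−ε_*, ε_*] ∪ [1 − δ − ε_*, ∞), and exactly K eigenvalues, counted with multiplicity, lie in [−ε_*, ε_*]; (ii) letting P_new denote the orthogonal projection onto the span of the eigenvectors of H with eigenvalue in [−ε_*, ε_*], one has ‖P_new − P‖ ≤ 4·√(ε_*). -/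

import Mathlib

open scoped InnerProductSpace
set_option maxHeartbeats 1000000

section helpers
variable {E : Type*} [NormedAddCommGroup E] [InnerProductSpace ℂ E] [FiniteDimensional ℂ E]

lemma proj_sq_apply {R : E →L[ℂ] E} (h : R * R = R) (x : E) : R (R x) = R x := by
  have := congrArg (fun A : E →L[ℂ] E => A x) h
  simpa using this

lemma proj_apply_mem {R : E →L[ℂ] E} (h : R * R = R) {x : E}
    (hx : x ∈ LinearMap.range (R : E →ₗ[ℂ] E)) : R x = x := by
  obtain ⟨y, rfl⟩ := hx
  exact proj_sq_apply h y

lemma proj_inner_self {R : E →L[ℂ] E} (h : R * R = R) (hsa : IsSelfAdjoint R) (ψ : E) :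
    ⟪R ψ, R ψ⟫_ℂ = ⟪ψ, R ψ⟫_ℂ := by
  have hsym := hsa.isSymmetric
  have e1 : ⟪R (R ψ), ψ⟫_ℂ = ⟪R ψ, R ψ⟫_ℂ := hsym (R ψ) ψ
  rw [proj_sq_apply h] at e1
  rw [← e1]
  exact hsym ψ ψ

lemma proj_norm_le {R : E →L[ℂ] E} (h : R * R = R) (hsa : IsSelfAdjoint R) (ψ : E) :
    ‖R ψ‖ ≤ ‖ψ‖ := by
  have h1 : (‖R ψ‖ : ℂ) * ‖R ψ‖ = ⟪ψ, R ψ⟫_ℂ := by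
    rw [← proj_inner_self h hsa ψ, inner_self_eq_norm_sq_to_K]
    rw [sq]; norm_cast
  have h2 : ‖R ψ‖ * ‖R ψ‖ ≤ ‖ψ‖ * ‖R ψ‖ := by
    calc ‖R ψ‖ * ‖R ψ‖ = ‖⟪ψ, R ψ⟫_ℂ‖ := by
          rw [← h1]; norm_cast; simp [abs_of_nonneg (norm_nonneg _)]
    _ ≤ ‖ψ‖ * ‖R ψ‖ := norm_inner_le_norm _ _
  rcases eq_or_lt_of_le (norm_nonneg (R ψ)) with h0 | h0
  · rw [← h0]; exact norm_nonneg ψ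
  · exact le_of_mul_le_mul_right h2 h0

lemma proj_apply_orth {R : E →L[ℂ] E} (h : R * R = R) (hsa : IsSelfAdjoint R) {x : E}
    (hx : ∀ y ∈ LinearMap.range (R : E →ₗ[ℂ] E), ⟪y, x⟫_ℂ = 0) : R x = 0 := by
  have h1 : ⟪R x, R x⟫_ℂ = 0 := by
    rw [proj_inner_self h hsa x, ← inner_conj_symm, hx (R x) ⟨x, rfl⟩]
    simp
  exact inner_self_eq_zero.mp h1

lemma term_eq {n : ℕ} (b : OrthonormalBasis (Fin n) ℂ E) (x : E) (i : Fin n) :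
    ⟪x, b i⟫_ℂ * ⟪b i, x⟫_ℂ = ((‖⟪b i, x⟫_ℂ‖ ^ 2 : ℝ) : ℂ) := by
  rw [← inner_conj_symm x (b i), RCLike.conj_mul]
  norm_cast

lemma norm_sq_sum_repr {n : ℕ} (b : OrthonormalBasis (Fin n) ℂ E) (x : E) :
    ‖x‖ ^ 2 = ∑ i, ‖⟪b i, x⟫_ℂ‖ ^ 2 := by
  have h2 : (⟪x, x⟫_ℂ) = ((∑ i, ‖⟪b i, x⟫_ℂ‖ ^ 2 : ℝ) : ℂ) := by
    rw [← b.sum_inner_mul_inner x x, Complex.ofReal_sum]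
    exact Finset.sum_congr rfl fun i _ => term_eq b x i
  have h3 := inner_self_eq_norm_sq (𝕜 := ℂ) x
  rw [h2] at h3
  rw [← h3]
  norm_cast

lemma inner_basis_apply {n : ℕ} {A : E →L[ℂ] E} (hA : IsSelfAdjoint A)
    {b : OrthonormalBasis (Fin n) ℂ E} {μ : Fin n → ℝ}
    (hb : ∀ i, A (b i) = (μ i : ℂ) • b i) (x : E) (i : Fin n) :
    ⟪b i, A x⟫_ℂ = (μ i : ℂ) * ⟪b i, x⟫_ℂ := by
  have h := hA.isSymmetric (b i) x
  simp only [ContinuousLinearMap.coe_coe] at h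
  rw [← h, hb i, inner_smul_left]
  simp [Complex.conj_ofReal]

lemma quad_re_eq {n : ℕ} {A : E →L[ℂ] E} (hA : IsSelfAdjoint A)
    {b : OrthonormalBasis (Fin n) ℂ E} {μ : Fin n → ℝ}
    (hb : ∀ i, A (b i) = (μ i : ℂ) • b i) (x : E) :
    (⟪x, A x⟫_ℂ).re = ∑ i, μ i * ‖⟪b i, x⟫_ℂ‖ ^ 2 := by
  have h2 : (⟪x, A x⟫_ℂ) = ((∑ i, μ i * ‖⟪b i, x⟫_ℂ‖ ^ 2 : ℝ) : ℂ) := by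
    rw [← b.sum_inner_mul_inner x (A x), Complex.ofReal_sum]
    refine Finset.sum_congr rfl fun i _ => ?_
    rw [inner_basis_apply hA hb x i, mul_comm ((μ i : ℂ)) _, ← mul_assoc, term_eq b x i]
    push_cast; ring
  rw [h2]
  norm_cast

lemma res_norm_sq {n : ℕ} {A : E →L[ℂ] E} (hA : IsSelfAdjoint A)
    {b : OrthonormalBasis (Fin n) ℂ E} {μ : Fin n → ℝ}
    (hb : ∀ i, A (b i) = (μ i : ℂ) • b i) (x : E) (c : ℝ) :
    ‖A x - (c : ℂ) • x‖ ^ 2 = ∑ i, (μ i - c) ^ 2 * ‖⟪b i, x⟫_ℂ‖ ^ 2 := by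
  rw [norm_sq_sum_repr b]
  refine Finset.sum_congr rfl fun i _ => ?_
  rw [inner_sub_right, inner_smul_right, inner_basis_apply hA hb x i]
  have : (μ i : ℂ) * ⟪b i, x⟫_ℂ - (c : ℂ) * ⟪b i, x⟫_ℂ = ((μ i - c : ℝ) : ℂ) • ⟪b i, x⟫_ℂ := by
    push_cast; ring_nf
  rw [this, norm_smul, mul_pow, Complex.norm_real, Real.norm_eq_abs, sq_abs]

lemma inner_V_re_bound {V : E →L[ℂ] E} {εs : ℝ} (hV : ‖V‖ ≤ εs) (x : E) :
    |(⟪x, V x⟫_ℂ).re| ≤ εs * ‖x‖ ^ 2 := by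
  have h1 : |(⟪x, V x⟫_ℂ).re| ≤ ‖⟪x, V x⟫_ℂ‖ := Complex.abs_re_le_norm _
  have h2 : ‖⟪x, V x⟫_ℂ‖ ≤ ‖x‖ * ‖V x‖ := norm_inner_le_norm _ _
  have h3 : ‖V x‖ ≤ ‖V‖ * ‖x‖ := V.le_opNorm x
  nlinarith [norm_nonneg x, norm_nonneg (V x), norm_nonneg V]

end helpers

theorem aux {E : Type*} [NormedAddCommGroup E] [InnerProductSpace ℂ E] [FiniteDimensional ℂ E]
    (H₀ D V P : E →L[ℂ] E) (K : ℕ) (δ εs : ℝ)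
    (hH₀sa : IsSelfAdjoint H₀)
    (hPidem : P * P = P) (hPsa : IsSelfAdjoint P)
    (hPker : LinearMap.range (P : E →ₗ[ℂ] E) = LinearMap.ker (H₀ : E →ₗ[ℂ] E))
    (hrank : Module.finrank ℂ (LinearMap.range (P : E →ₗ[ℂ] E)) = K)
    (hgap : ∀ ψ : E, ‖ψ - P ψ‖ ^ 2 ≤ (⟪ψ, H₀ ψ⟫_ℂ).re)
    (hDsa : IsSelfAdjoint D) (hD : ∀ ψ : E, ‖D ψ‖ ≤ δ * ‖H₀ ψ‖) (hδ : δ ≤ 1 / 3)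
    (hVsa : IsSelfAdjoint V) (hV : ‖V‖ ≤ εs) (hεs : εs ≤ 1 / 18) (hδ0 : 0 ≤ δ) :
    (∀ μ : ℂ, Module.End.HasEigenvalue ((H₀ + D + V : E →L[ℂ] E) : E →ₗ[ℂ] E) μ →
        μ.im = 0 ∧ (μ.re ∈ Set.Icc (-εs) εs ∪ Set.Ici (1 - δ - εs))) ∧
    Module.finrank ℂ
      ↥(⨆ t : ℝ, ⨆ (_ : t ∈ Set.Icc (-εs) εs),
          Module.End.eigenspace ((H₀ + D + V : E →L[ℂ] E) : E →ₗ[ℂ] E) (t : ℂ)) = K ∧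
    (∀ Pnew : E →L[ℂ] E, Pnew * Pnew = Pnew → IsSelfAdjoint Pnew →
      LinearMap.range (Pnew : E →ₗ[ℂ] E) =
        (⨆ t : ℝ, ⨆ (_ : t ∈ Set.Icc (-εs) εs),
          Module.End.eigenspace ((H₀ + D + V : E →L[ℂ] E) : E →ₗ[ℂ] E) (t : ℂ)) →
      ‖Pnew - P‖ ≤ 4 * Real.sqrt εs) := by
  have hε0 : 0 ≤ εs := le_trans (norm_nonneg V) hV
  set H' : E →L[ℂ] E := H₀ + D with hH'def
  set H : E →L[ℂ] E := H₀ + D + V with hHdef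
  have hH'sa : IsSelfAdjoint H' := hH₀sa.add hDsa
  have hHsa : IsSelfAdjoint H := hH'sa.add hVsa
  have hHapp : ∀ x, H x = H' x + V x := fun x => rfl
  -- range P = kernel of H'
  have hker1 : ∀ x, x ∈ LinearMap.range (P : E →ₗ[ℂ] E) → H' x = 0 := by
    intro x hx
    have hx0 : H₀ x = 0 := by
      rw [hPker] at hx; exact hx
    have hDx : D x = 0 := by
      have := hD x
      rw [hx0] at this
      simp only [norm_zero, mul_zero] at this
      exact norm_le_zero_iff.mp this
    show H₀ x + D x = 0
    rw [hx0, hDx, add_zero]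
  have hker2 : ∀ x, H' x = 0 → x ∈ LinearMap.range (P : E →ₗ[ℂ] E) := by
    intro x hx
    have hsum : H₀ x = - D x := by
      have : H₀ x + D x = 0 := hx
      linear_combination (norm := module) this
    have h0 : ‖H₀ x‖ ≤ δ * ‖H₀ x‖ := by
      calc ‖H₀ x‖ = ‖D x‖ := by rw [hsum, norm_neg]
      _ ≤ δ * ‖H₀ x‖ := hD x
    have h1 : ‖H₀ x‖ = 0 := by nlinarith [norm_nonneg (H₀ x)]
    rw [hPker]
    exact norm_le_zero_iff.mp (le_of_eq h1)
  -- eigenbasis of H'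
  obtain ⟨g, ν, hg⟩ : ∃ (g : OrthonormalBasis (Fin (Module.finrank ℂ E)) ℂ E)
      (ν : Fin (Module.finrank ℂ E) → ℝ), ∀ i, H' (g i) = (ν i : ℂ) • g i := by
    have hsym := hH'sa.isSymmetric
    exact ⟨hsym.eigenvectorBasis rfl, hsym.eigenvalues rfl,
      fun i => hsym.apply_eigenvectorBasis rfl i⟩
  -- facts about g, ν
  have hPg0 : ∀ j, ν j = 0 → P (g j) = g j := by
    intro j hj
    refine proj_apply_mem hPidem (hker2 _ ?_)
    rw [hg j, hj]; simp
  have hPgO : ∀ j, ν j ≠ 0 → P (g j) = 0 := by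
    intro j hj
    refine proj_apply_orth hPidem hPsa ?_
    intro y hy
    have h1 : ⟪y, H' (g j)⟫_ℂ = 0 := by
      have := hH'sa.isSymmetric y (g j)
      simp only [ContinuousLinearMap.coe_coe] at this
      rw [← this, hker1 y hy, inner_zero_left]
    rw [hg j, inner_smul_right] at h1
    have hν : (ν j : ℂ) ≠ 0 := by exact_mod_cast hj
    exact (mul_eq_zero.mp h1).resolve_left hν
  have hν : ∀ j, ν j = 0 ∨ 1 - δ ≤ ν j := by
    intro j
    by_cases hj : ν j = 0
    · exact Or.inl hj
    right
    have hnorm : ‖g j‖ = 1 := g.orthonormal.1 j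
    have hgap' : (1:ℝ) ≤ (⟪g j, H₀ (g j)⟫_ℂ).re := by
      have := hgap (g j)
      rw [hPgO j hj, sub_zero, hnorm] at this
      simpa using this
    have hquad : (⟪g j, H' (g j)⟫_ℂ).re = ν j := by
      rw [hg j, inner_smul_right]
      simp [inner_self_eq_norm_sq_to_K, hnorm]
    have hDre : |(⟪g j, D (g j)⟫_ℂ).re| ≤ ‖D (g j)‖ := by
      calc |(⟪g j, D (g j)⟫_ℂ).re| ≤ ‖⟪g j, D (g j)⟫_ℂ‖ := Complex.abs_re_le_norm _
      _ ≤ ‖g j‖ * ‖D (g j)‖ := norm_inner_le_norm _ _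
      _ = ‖D (g j)‖ := by rw [hnorm, one_mul]
    have hsplit : (⟪g j, H' (g j)⟫_ℂ).re = (⟪g j, H₀ (g j)⟫_ℂ).re + (⟪g j, D (g j)⟫_ℂ).re := by
      have : H' (g j) = H₀ (g j) + D (g j) := rfl
      rw [this, inner_add_right, Complex.add_re]
    have hH0g : ‖H₀ (g j)‖ ≤ |ν j| + δ * ‖H₀ (g j)‖ := by
      have heq : H₀ (g j) = (ν j : ℂ) • g j - D (g j) := by
        have h1 : H₀ (g j) + D (g j) = (ν j : ℂ) • g j := hg j
        linear_combination (norm := module) h1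
      calc ‖H₀ (g j)‖ = ‖(ν j : ℂ) • g j - D (g j)‖ := by rw [heq]
      _ ≤ ‖(ν j : ℂ) • g j‖ + ‖D (g j)‖ := norm_sub_le _ _
      _ ≤ |ν j| + δ * ‖H₀ (g j)‖ := by
          have e1 : ‖(ν j : ℂ) • g j‖ = |ν j| := by
            rw [norm_smul, hnorm, mul_one, Complex.norm_real, Real.norm_eq_abs]
          rw [e1]
          exact add_le_add le_rfl (hD _)
    have hDg : ‖D (g j)‖ ≤ δ * ‖H₀ (g j)‖ := hD _
    have hlow : 1 - δ * ‖H₀ (g j)‖ ≤ ν j := by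
      have h1 : -(δ * ‖H₀ (g j)‖) ≤ (⟪g j, D (g j)⟫_ℂ).re := by
        have h2 := neg_abs_le ((⟪g j, D (g j)⟫_ℂ).re)
        linarith [hDre, hDg]
      linarith [hgap', hsplit, hquad]
    have h' : (1 - δ) * ‖H₀ (g j)‖ ≤ |ν j| := by nlinarith [hH0g]
    have p2 : (1 - δ) * (1 - δ * ‖H₀ (g j)‖) ≤ (1 - δ) * ν j :=
      mul_le_mul_of_nonneg_left hlow (by linarith)
    rcases le_or_gt 0 (ν j) with hs | hs
    · rw [abs_of_nonneg hs] at h'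
      have p1 : δ * ((1 - δ) * ‖H₀ (g j)‖) ≤ δ * ν j := mul_le_mul_of_nonneg_left h' hδ0
      nlinarith [p1, p2]
    · exfalso
      rw [abs_of_neg hs] at h'
      have p1 : δ * ((1 - δ) * ‖H₀ (g j)‖) ≤ δ * (-ν j) := mul_le_mul_of_nonneg_left h' hδ0
      nlinarith [p1, p2, hs]
  -- form bound for H'
  have FB : ∀ x : E, (1 - δ) * ‖x - P x‖ ^ 2 ≤ (⟪x, H' x⟫_ℂ).re := by
    intro x
    have hrepr : ∀ j, ⟪g j, x - P x⟫_ℂ = if ν j = 0 then 0 else ⟪g j, x⟫_ℂ := by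
      intro j
      have hsymP := hPsa.isSymmetric (g j) x
      simp only [ContinuousLinearMap.coe_coe] at hsymP
      by_cases hj : ν j = 0
      · rw [if_pos hj, inner_sub_right, ← hsymP, hPg0 j hj, sub_self]
      · rw [if_neg hj, inner_sub_right, ← hsymP, hPgO j hj, inner_zero_left, sub_zero]
    calc (1 - δ) * ‖x - P x‖ ^ 2 = ∑ j, (1 - δ) * ‖⟪g j, x - P x⟫_ℂ‖ ^ 2 := by
          rw [norm_sq_sum_repr g (x - P x), Finset.mul_sum]
    _ ≤ ∑ j, ν j * ‖⟪g j, x⟫_ℂ‖ ^ 2 := by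
          refine Finset.sum_le_sum fun j _ => ?_
          rw [hrepr j]
          by_cases hj : ν j = 0
          · simp [hj]
          · rw [if_neg hj]
            have h1 := (hν j).resolve_left hj
            have hnn : (0:ℝ) ≤ ‖⟪g j, x⟫_ℂ‖ ^ 2 := by positivity
            nlinarith
    _ = (⟪x, H' x⟫_ℂ).re := (quad_re_eq hH'sa hg x).symm
  -- splitting of the quadratic form of H
  have hsplitH : ∀ x : E, (⟪x, H x⟫_ℂ).re = (⟪x, H' x⟫_ℂ).re + (⟪x, V x⟫_ℂ).re := by
    intro x
    rw [hHapp x, inner_add_right, Complex.add_re]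
  -- PART 1 : eigenvalue location
  have PART1 : ∀ μc : ℂ, Module.End.HasEigenvalue (H : E →ₗ[ℂ] E) μc →
      μc.im = 0 ∧ (μc.re ∈ Set.Icc (-εs) εs ∪ Set.Ici (1 - δ - εs)) := by
    intro μc hμc
    have him : μc.im = 0 := Complex.conj_eq_iff_im.mp (hHsa.isSymmetric.conj_eigenvalue_eq_self hμc)
    refine ⟨him, ?_⟩
    set t : ℝ := μc.re with ht
    have hμct : μc = (t : ℂ) := Complex.ext rfl (by simp [him])
    obtain ⟨ψ, hψmem, hψ0⟩ := hμc.exists_hasEigenvector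
    have hψeq : H ψ = (t : ℂ) • ψ := by
      have := Module.End.mem_eigenspace_iff.mp hψmem
      rw [← hμct]
      exact this
    by_contra hcon
    have hc1 : ¬ (t ∈ Set.Icc (-εs) εs) := fun h => hcon (Or.inl h)
    have hc2 : ¬ (t ∈ Set.Ici (1 - δ - εs)) := fun h => hcon (Or.inr h)
    simp only [Set.mem_Icc, not_and_or, not_le] at hc1
    simp only [Set.mem_Ici, not_le] at hc2
    have SEP : ∀ j, εs < |ν j - t| := by
      intro j
      rcases hν j with h0 | h1
      · rw [h0, zero_sub, abs_neg]
        rcases hc1 with h | h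
        · rw [abs_of_neg (by linarith : t < 0)]; linarith
        · rw [abs_of_pos (by linarith : 0 < t)]; linarith
      · have : εs < ν j - t := by linarith
        rw [abs_of_pos (by linarith)]; linarith
    -- resolvent estimate
    have hres : H' ψ - (t : ℂ) • ψ = -(V ψ) := by
      have h1 : H' ψ + V ψ = (t : ℂ) • ψ := by rw [← hψeq]; exact (hHapp ψ).symm
      rw [← h1]; abel
    have hVψ : ‖H' ψ - (t : ℂ) • ψ‖ ≤ εs * ‖ψ‖ := by
      rw [hres, norm_neg]
      calc ‖V ψ‖ ≤ ‖V‖ * ‖ψ‖ := V.le_opNorm ψ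
      _ ≤ εs * ‖ψ‖ := mul_le_mul_of_nonneg_right hV (norm_nonneg ψ)
    have hup : ∑ j, (ν j - t) ^ 2 * ‖⟪g j, ψ⟫_ℂ‖ ^ 2 ≤ εs ^ 2 * ‖ψ‖ ^ 2 := by
      rw [← res_norm_sq hH'sa hg ψ t]
      calc ‖H' ψ - (t:ℂ) • ψ‖ ^ 2 ≤ (εs * ‖ψ‖) ^ 2 := by
            apply sq_le_sq' _ hVψ
            have : (0:ℝ) ≤ εs * ‖ψ‖ := by positivity
            linarith [norm_nonneg (H' ψ - (t:ℂ) • ψ)]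
      _ = εs ^ 2 * ‖ψ‖ ^ 2 := by ring
    have hlow : ∀ j, εs ^ 2 * ‖⟪g j, ψ⟫_ℂ‖ ^ 2 ≤ (ν j - t) ^ 2 * ‖⟪g j, ψ⟫_ℂ‖ ^ 2 := by
      intro j
      have h1 : εs ^ 2 ≤ (ν j - t) ^ 2 := by
        have := SEP j
        nlinarith [abs_nonneg (ν j - t), sq_abs (ν j - t)]
      have hnn : (0:ℝ) ≤ ‖⟪g j, ψ⟫_ℂ‖ ^ 2 := by positivity
      nlinarith
    -- each coefficient together with Parseval forces ψ = 0
    have hzero : ∀ j, ‖⟪g j, ψ⟫_ℂ‖ ^ 2 = 0 := by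
      have hsum0 : ∑ j, ((ν j - t) ^ 2 - εs ^ 2) * ‖⟪g j, ψ⟫_ℂ‖ ^ 2 ≤ 0 := by
        have e1 : ∑ j, ((ν j - t) ^ 2 - εs ^ 2) * ‖⟪g j, ψ⟫_ℂ‖ ^ 2
            = ∑ j, (ν j - t) ^ 2 * ‖⟪g j, ψ⟫_ℂ‖ ^ 2 - εs ^ 2 * ∑ j, ‖⟪g j, ψ⟫_ℂ‖ ^ 2 := by
          rw [Finset.mul_sum, ← Finset.sum_sub_distrib]
          exact Finset.sum_congr rfl fun j _ => by ring
        rw [e1, ← norm_sq_sum_repr g ψ]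
        linarith [hup]
      have hterm : ∀ j ∈ Finset.univ, (0:ℝ) ≤ ((ν j - t) ^ 2 - εs ^ 2) * ‖⟪g j, ψ⟫_ℂ‖ ^ 2 := by
        intro j _
        have h1 : εs ^ 2 ≤ (ν j - t) ^ 2 := by
          have := SEP j
          nlinarith [abs_nonneg (ν j - t), sq_abs (ν j - t)]
        have hnn : (0:ℝ) ≤ ‖⟪g j, ψ⟫_ℂ‖ ^ 2 := by positivity
        nlinarith
      have hall := (Finset.sum_eq_zero_iff_of_nonneg hterm).mp
        (le_antisymm hsum0 (Finset.sum_nonneg hterm))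
      intro j
      have := hall j (Finset.mem_univ j)
      have h1 : εs ^ 2 < (ν j - t) ^ 2 := by
        have h2 := SEP j
        nlinarith [abs_nonneg (ν j - t), sq_abs (ν j - t), hε0]
      have h3 : (ν j - t) ^ 2 - εs ^ 2 ≠ 0 := by nlinarith
      exact (mul_eq_zero.mp this).resolve_left h3
    have : ‖ψ‖ ^ 2 = 0 := by
      rw [norm_sq_sum_repr g ψ]
      exact Finset.sum_eq_zero fun j _ => hzero j
    exact hψ0 (by simpa using pow_eq_zero_iff (n := 2) (by norm_num) |>.mp this)
  -- eigenbasis of H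
  obtain ⟨b, μ, hb⟩ : ∃ (b : OrthonormalBasis (Fin (Module.finrank ℂ E)) ℂ E)
      (μ : Fin (Module.finrank ℂ E) → ℝ), ∀ i, H (b i) = (μ i : ℂ) • b i := by
    have hsym := hHsa.isSymmetric
    exact ⟨hsym.eigenvectorBasis rfl, hsym.eigenvalues rfl,
      fun i => hsym.apply_eigenvectorBasis rfl i⟩
  classical
  set good : Finset (Fin (Module.finrank ℂ E)) :=
    Finset.univ.filter (fun i => μ i ∈ Set.Icc (-εs) εs) with hgood
  have hgoodmem : ∀ i, i ∈ good ↔ μ i ∈ Set.Icc (-εs) εs := by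
    intro i
    rw [hgood, Finset.mem_filter]
    simp
  have hbad : ∀ i, i ∉ good → 1 - δ - εs ≤ μ i := by
    intro i hi
    have heig : Module.End.HasEigenvalue (H : E →ₗ[ℂ] E) ((μ i : ℝ) : ℂ) := by
      refine Module.End.hasEigenvalue_of_hasEigenvector ⟨?_, b.orthonormal.ne_zero i⟩
      exact Module.End.mem_eigenspace_iff.mpr (hb i)
    have h2 := (PART1 _ heig).2
    rw [Complex.ofReal_re] at h2
    rcases h2 with h | h
    · exact absurd ((hgoodmem i).mpr h) hi
    · exact h
  have hgoodbound : ∀ i, i ∈ good → -εs ≤ μ i ∧ μ i ≤ εs := by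
    intro i hi
    have := (hgoodmem i).mp hi
    exact ⟨this.1, this.2⟩
  set T : Submodule ℂ E :=
    Submodule.span ℂ (Set.range (fun i : {i // i ∈ good} => b i)) with hT
  set S : Submodule ℂ E := (⨆ t : ℝ, ⨆ (_ : t ∈ Set.Icc (-εs) εs),
      Module.End.eigenspace (H : E →ₗ[ℂ] E) (t : ℂ)) with hS
  have hmemT : ∀ i, i ∈ good → b i ∈ T := fun i hi => Submodule.subset_span ⟨⟨i, hi⟩, rfl⟩
  have M2 : ∀ x ∈ T, ∀ j, j ∉ good → ⟪b j, x⟫_ℂ = 0 := by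
    intro x hx j hj
    induction hx using Submodule.span_induction with
    | mem y hy =>
        obtain ⟨⟨i, hi⟩, rfl⟩ := hy
        have hne : j ≠ i := fun h => hj (h ▸ hi)
        exact orthonormal_iff_ite.mp b.orthonormal j i |>.trans (if_neg hne)
    | zero => exact inner_zero_right _
    | add y z hy hz hy' hz' => rw [inner_add_right, hy', hz', add_zero]
    | smul c y hy hy' => rw [inner_smul_right, hy', mul_zero]
  have M3 : ∀ x : E, (∀ j, j ∉ good → ⟪b j, x⟫_ℂ = 0) → x ∈ T := by
    intro x hx
    have hx2 : ∑ j ∈ good, ⟪b j, x⟫_ℂ • b j = x :=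
      (Finset.sum_subset (Finset.subset_univ good)
        (fun j _ hj => by rw [hx j hj, zero_smul])).trans (b.sum_repr' x)
    rw [← hx2]
    exact Submodule.sum_mem _ fun j hj => Submodule.smul_mem _ _ (hmemT j hj)
  have hST : S = T := by
    apply le_antisymm
    · refine iSup_le fun t => iSup_le fun ht => ?_
      intro x hx
      refine M3 x fun j hj => ?_
      have heig : H x = ((t : ℝ) : ℂ) • x := Module.End.mem_eigenspace_iff.mp hx
      have h1 : ⟪b j, H x⟫_ℂ = (μ j : ℂ) * ⟪b j, x⟫_ℂ := inner_basis_apply hHsa hb x j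
      have h2 : ⟪b j, H x⟫_ℂ = ((t : ℝ) : ℂ) * ⟪b j, x⟫_ℂ := by
        rw [heig, inner_smul_right]
      by_contra hd
      have h4 : (μ j : ℂ) = ((t : ℝ) : ℂ) := mul_right_cancel₀ hd (h1.symm.trans h2)
      have h5 : μ j = t := by exact_mod_cast h4
      exact hj ((hgoodmem j).mpr (h5 ▸ ht))
    · rw [hT]
      refine Submodule.span_le.mpr ?_
      rintro _ ⟨⟨i, hi⟩, rfl⟩
      have hIcc : μ i ∈ Set.Icc (-εs) εs := (hgoodmem i).mp hi
      have : b i ∈ Module.End.eigenspace (H : E →ₗ[ℂ] E) ((μ i : ℝ) : ℂ) :=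
        Module.End.mem_eigenspace_iff.mpr (hb i)
      exact Submodule.mem_iSup_of_mem (μ i) (Submodule.mem_iSup_of_mem hIcc this)
  have hcardT : Module.finrank ℂ T = good.card := by
    have hli : LinearIndependent ℂ (fun i : {i // i ∈ good} => b i) :=
      (b.orthonormal.linearIndependent).comp _ Subtype.val_injective
    rw [hT, finrank_span_eq_card hli, Fintype.card_coe]
  -- upper bounds for the quadratic form of H
  have HupT : ∀ x : E, (∀ j, j ∉ good → ⟪b j, x⟫_ℂ = 0) → (⟪x, H x⟫_ℂ).re ≤ εs * ‖x‖ ^ 2 := by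
    intro x hx
    rw [quad_re_eq hHsa hb x, norm_sq_sum_repr b x, Finset.mul_sum]
    refine Finset.sum_le_sum fun j _ => ?_
    by_cases hj : j ∈ good
    · have := (hgoodbound j hj).2
      have hnn : (0:ℝ) ≤ ‖⟪b j, x⟫_ℂ‖ ^ 2 := by positivity
      nlinarith
    · rw [hx j hj]
      simp [hε0]
  have HupP : ∀ x : E, x ∈ LinearMap.range (P : E →ₗ[ℂ] E) → (⟪x, H x⟫_ℂ).re ≤ εs * ‖x‖ ^ 2 := by
    intro x hxP
    rw [hsplitH x]
    have h1 : H' x = 0 := hker1 x hxP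
    have h2 : (⟪x, H' x⟫_ℂ).re = 0 := by rw [h1, inner_zero_right]; simp
    have h3 := abs_le.mp (inner_V_re_bound hV x)
    linarith [h3.2]
  -- m ≤ K
  have Hkey1 : ∀ x : E, (∀ j, j ∉ good → ⟪b j, x⟫_ℂ = 0) → P x = 0 → x = 0 := by
    intro x hx hPx
    have hup := HupT x hx
    have hlowV : -(εs * ‖x‖ ^ 2) ≤ (⟪x, V x⟫_ℂ).re := by
      have := inner_V_re_bound hV x
      linarith [neg_abs_le ((⟪x, V x⟫_ℂ).re)]
    have hlow : (1 - δ) * ‖x‖ ^ 2 - εs * ‖x‖ ^ 2 ≤ (⟪x, H x⟫_ℂ).re := by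
      have h1 := FB x
      rw [hPx, sub_zero] at h1
      rw [hsplitH x]
      linarith
    have : ‖x‖ ^ 2 ≤ 0 := by nlinarith [sq_nonneg ‖x‖]
    have hx0 : ‖x‖ = 0 := by nlinarith [norm_nonneg x, sq_nonneg ‖x‖]
    exact norm_eq_zero.mp hx0
  have hrankT1 : Module.finrank ℂ T ≤ K := by
    have hfinj : Function.Injective
        (LinearMap.codRestrict (LinearMap.range (P : E →ₗ[ℂ] E))
          ((P : E →ₗ[ℂ] E) ∘ₗ T.subtype) (fun x => LinearMap.mem_range_self _ _)) := by
      rw [← LinearMap.ker_eq_bot, LinearMap.ker_codRestrict, LinearMap.ker_eq_bot']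
      intro x hfx
      have hPx : P x.1 = 0 := hfx
      exact Subtype.ext (Hkey1 x.1 (M2 x.1 x.2) hPx)
    have := LinearMap.finrank_le_finrank_of_injective hfinj
    rwa [hrank] at this
  -- K ≤ m
  set Plin : E →ₗ[ℂ] E := ∑ j ∈ good, ((innerSL ℂ (b j)).toLinearMap.smulRight (b j))
    with hPlindef
  have hPlin : ∀ x : E, Plin x = ∑ j ∈ good, ⟪b j, x⟫_ℂ • b j := by
    intro x
    rw [hPlindef, LinearMap.sum_apply]
    exact Finset.sum_congr rfl fun j _ => by
      simp [LinearMap.smulRight_apply, innerSL_apply_apply]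
  have hPlinmem : ∀ x : E, Plin x ∈ T := by
    intro x
    rw [hPlin x]
    exact Submodule.sum_mem _ fun j hj => Submodule.smul_mem _ _ (hmemT j hj)
  have Hkey2 : ∀ x : E, x ∈ LinearMap.range (P : E →ₗ[ℂ] E) →
      (∀ j, j ∈ good → ⟪b j, x⟫_ℂ = 0) → x = 0 := by
    intro x hxP hx
    have hlow : (1 - δ - εs) * ‖x‖ ^ 2 ≤ (⟪x, H x⟫_ℂ).re := by
      rw [quad_re_eq hHsa hb x, norm_sq_sum_repr b x, Finset.mul_sum]
      refine Finset.sum_le_sum fun j _ => ?_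
      by_cases hj : j ∈ good
      · rw [hx j hj]
        simp
      · have := hbad j hj
        have hnn : (0:ℝ) ≤ ‖⟪b j, x⟫_ℂ‖ ^ 2 := by positivity
        nlinarith
    have hup := HupP x hxP
    have : ‖x‖ ^ 2 ≤ 0 := by nlinarith [sq_nonneg ‖x‖]
    have hx0 : ‖x‖ = 0 := by nlinarith [norm_nonneg x]
    exact norm_eq_zero.mp hx0
  have hrankT2 : K ≤ Module.finrank ℂ T := by
    have hfinj : Function.Injective
        (LinearMap.codRestrict T (Plin ∘ₗ (LinearMap.range (P : E →ₗ[ℂ] E)).subtype)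
          (fun x => hPlinmem _)) := by
      rw [← LinearMap.ker_eq_bot, LinearMap.ker_codRestrict, LinearMap.ker_eq_bot']
      intro x hfx
      have hPlx : Plin x.1 = 0 := hfx
      refine Subtype.ext (Hkey2 x.1 x.2 fun j hj => ?_)
      have h1 : ⟪b j, Plin x.1⟫_ℂ = ⟪b j, x.1⟫_ℂ := by
        rw [hPlin]
        rw [inner_sum]
        rw [Finset.sum_eq_single j]
        · rw [inner_smul_right, orthonormal_iff_ite.mp b.orthonormal j j, if_pos rfl, mul_one]
        · intro i hi hij
          rw [inner_smul_right, orthonormal_iff_ite.mp b.orthonormal j i,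
            if_neg (fun h => hij h.symm), mul_zero]
        · intro hjj
          exact absurd hj hjj
      rw [← h1, hPlx, inner_zero_right]
    have h6 := LinearMap.finrank_le_finrank_of_injective hfinj
    rwa [hrank] at h6
  have hfinalrank : Module.finrank ℂ S = K := by
    rw [hST]
    exact le_antisymm hrankT1 hrankT2
  -- PART 3
  have PART3 : ∀ Pnew : E →L[ℂ] E, Pnew * Pnew = Pnew → IsSelfAdjoint Pnew →
      LinearMap.range (Pnew : E →ₗ[ℂ] E) = S → ‖Pnew - P‖ ≤ 4 * Real.sqrt εs := by
    intro Pnew hPn1 hPn2 hPn3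
    rw [hST] at hPn3
    have hPnb : ∀ j ∈ good, Pnew (b j) = b j := fun j hj =>
      proj_apply_mem hPn1 (by rw [hPn3]; exact hmemT j hj)
    have hPnb0 : ∀ j, j ∉ good → Pnew (b j) = 0 := by
      intro j hj
      refine proj_apply_orth hPn1 hPn2 fun y hy => ?_
      rw [hPn3] at hy
      rw [← inner_conj_symm, M2 y hy j hj, map_zero]
    have hPnrepr : ∀ (x : E) (j), ⟪b j, Pnew x⟫_ℂ = if j ∈ good then ⟪b j, x⟫_ℂ else 0 := by
      intro x j
      have hsymPn := hPn2.isSymmetric (b j) x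
      simp only [ContinuousLinearMap.coe_coe] at hsymPn
      by_cases hj : j ∈ good
      · rw [if_pos hj, ← hsymPn, hPnb j hj]
      · rw [if_neg hj, ← hsymPn, hPnb0 j hj, inner_zero_left]
    have B2 : ∀ ψ : E, ‖Pnew ψ - P (Pnew ψ)‖ ^ 2 ≤ 3 * εs * ‖ψ‖ ^ 2 := by
      intro ψ
      set y := Pnew ψ with hy
      have hyT : y ∈ T := by
        rw [← hPn3]
        exact ⟨ψ, rfl⟩
      have hym : ‖y‖ ≤ ‖ψ‖ := proj_norm_le hPn1 hPn2 ψ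
      have hup := HupT y (M2 y hyT)
      have hlow : (1 - δ) * ‖y - P y‖ ^ 2 - εs * ‖y‖ ^ 2 ≤ (⟪y, H y⟫_ℂ).re := by
        rw [hsplitH y]
        have h1 := FB y
        have h2 := abs_le.mp (inner_V_re_bound hV y)
        linarith [h2.1]
      have h3 : (1 - δ) * ‖y - P y‖ ^ 2 ≤ 2 * εs * ‖y‖ ^ 2 := by linarith
      have h4 : ‖y‖ ^ 2 ≤ ‖ψ‖ ^ 2 := by nlinarith [norm_nonneg y, norm_nonneg ψ]
      nlinarith [sq_nonneg ‖y - P y‖, sq_nonneg ‖y‖, hε0]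
    have B1 : ∀ ψ : E, ‖P ψ - Pnew (P ψ)‖ ^ 2 ≤ 3 * εs * ‖ψ‖ ^ 2 := by
      intro ψ
      set y := P ψ with hy
      have hyP : y ∈ LinearMap.range (P : E →ₗ[ℂ] E) := ⟨ψ, rfl⟩
      have hym : ‖y‖ ≤ ‖ψ‖ := proj_norm_le hPidem hPsa ψ
      have hnormsplit : ‖y - Pnew y‖ ^ 2
          = ∑ j, (if j ∈ good then 0 else ‖⟪b j, y⟫_ℂ‖ ^ 2) := by
        rw [norm_sq_sum_repr b (y - Pnew y)]
        refine Finset.sum_congr rfl fun j _ => ?_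
        rw [inner_sub_right, hPnrepr y j]
        by_cases hj : j ∈ good
        · rw [if_pos hj, if_pos hj, sub_self]
          simp
        · rw [if_neg hj, if_neg hj, sub_zero]
      have hq : -εs * ‖y‖ ^ 2 + (1 - δ) * ∑ j, (if j ∈ good then 0 else ‖⟪b j, y⟫_ℂ‖ ^ 2)
          ≤ (⟪y, H y⟫_ℂ).re := by
        rw [quad_re_eq hHsa hb y]
        have hterm : ∀ j ∈ Finset.univ,
            -εs * ‖⟪b j, y⟫_ℂ‖ ^ 2 + (1 - δ) * (if j ∈ good then 0 else ‖⟪b j, y⟫_ℂ‖ ^ 2)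
              ≤ μ j * ‖⟪b j, y⟫_ℂ‖ ^ 2 := by
          intro j _
          have hnn : (0:ℝ) ≤ ‖⟪b j, y⟫_ℂ‖ ^ 2 := by positivity
          by_cases hj : j ∈ good
          · rw [if_pos hj, mul_zero, add_zero]
            have := (hgoodbound j hj).1
            nlinarith
          · rw [if_neg hj]
            have := hbad j hj
            nlinarith
        have hsum := Finset.sum_le_sum hterm
        rw [Finset.sum_add_distrib, ← Finset.mul_sum, ← Finset.mul_sum,
          ← norm_sq_sum_repr b y] at hsum
        exact hsum
      have hup := HupP y hyP
      have h3 : (1 - δ) * ‖y - Pnew y‖ ^ 2 ≤ 2 * εs * ‖y‖ ^ 2 := by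
        rw [hnormsplit]
        linarith
      have h4 : ‖y‖ ^ 2 ≤ ‖ψ‖ ^ 2 := by nlinarith [norm_nonneg y, norm_nonneg ψ]
      nlinarith [sq_nonneg ‖y - Pnew y‖, sq_nonneg ‖y‖, hε0]
    -- assemble the operator norm bound
    have hid : Pnew - P = (1 - P) * Pnew - P * (1 - Pnew) := by noncomm_ring
    have sqrt_bound : ∀ z ψ : E, ‖z‖ ^ 2 ≤ 3 * εs * ‖ψ‖ ^ 2 → ‖z‖ ≤ Real.sqrt (3 * εs) * ‖ψ‖ := by
      intro z ψ hzψ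
      have h1 : ‖z‖ ≤ Real.sqrt (3 * εs * ‖ψ‖ ^ 2) := by
        rw [← Real.sqrt_sq (norm_nonneg z)]
        exact Real.sqrt_le_sqrt hzψ
      rwa [Real.sqrt_mul (by positivity), Real.sqrt_sq (norm_nonneg ψ)] at h1
    have hb1 : ‖(1 - P) * Pnew‖ ≤ Real.sqrt (3 * εs) := by
      refine ContinuousLinearMap.opNorm_le_bound _ (Real.sqrt_nonneg _) fun ψ => ?_
      have happ : ((1 - P) * Pnew) ψ = Pnew ψ - P (Pnew ψ) := by
        simp [ContinuousLinearMap.mul_apply, ContinuousLinearMap.sub_apply,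
          ContinuousLinearMap.one_apply]
      rw [happ]
      exact sqrt_bound _ ψ (B2 ψ)
    have hb2 : ‖P * (1 - Pnew)‖ ≤ Real.sqrt (3 * εs) := by
      have h1sa : IsSelfAdjoint (1 - Pnew : E →L[ℂ] E) := (IsSelfAdjoint.one (R := E →L[ℂ] E)).sub hPn2
      have hst : star ((1 - Pnew) * P) = P * (1 - Pnew) := by
        rw [star_mul, h1sa.star_eq, hPsa.star_eq]
      have hne : ‖P * (1 - Pnew)‖ = ‖(1 - Pnew) * P‖ := by
        rw [← hst, ContinuousLinearMap.star_eq_adjoint]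
        exact LinearIsometryEquiv.norm_map ContinuousLinearMap.adjoint _
      rw [hne]
      refine ContinuousLinearMap.opNorm_le_bound _ (Real.sqrt_nonneg _) fun ψ => ?_
      have happ : ((1 - Pnew) * P) ψ = P ψ - Pnew (P ψ) := by
        simp [ContinuousLinearMap.mul_apply, ContinuousLinearMap.sub_apply,
          ContinuousLinearMap.one_apply]
      rw [happ]
      exact sqrt_bound _ ψ (B1 ψ)
    have hsum : ‖Pnew - P‖ ≤ 2 * Real.sqrt (3 * εs) := by
      calc ‖Pnew - P‖ = ‖(1 - P) * Pnew - P * (1 - Pnew)‖ := by rw [← hid]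
      _ ≤ ‖(1 - P) * Pnew‖ + ‖P * (1 - Pnew)‖ := norm_sub_le _ _
      _ ≤ 2 * Real.sqrt (3 * εs) := by linarith
    have e1 : Real.sqrt (3 * εs) = Real.sqrt 3 * Real.sqrt εs := Real.sqrt_mul (by norm_num) εs
    have h3le : Real.sqrt 3 ≤ 2 := by
      nlinarith [Real.sq_sqrt (by norm_num : (0:ℝ) ≤ 3), Real.sqrt_nonneg 3]
    rw [e1] at hsum
    nlinarith [Real.sqrt_nonneg εs]
  exact ⟨PART1, hfinalrank, PART3⟩


/-- Spectral stability of a gapped Hamiltonian under a relatively bounded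
block-diagonal term plus a small perturbation.  `H₀ ≥ 0` with kernel projector `P` of
rank `K` and spectrum in `{0} ∪ [1, ∞)`, `‖Dψ‖ ≤ δ‖H₀ψ‖` with `δ ≤ 1/3`, and
`‖V‖ ≤ ε_* ≤ 1/18`.  Then all eigenvalues of `H = H₀ + D + V` are real and lie in
`[−ε_*, ε_*] ∪ [1 − δ − ε_*, ∞)`, the sum of the eigenspaces for eigenvalues in
`[−ε_*, ε_*]` has dimension `K`, and the orthogonal projection `P_new` onto it
satisfies `‖P_new − P‖ ≤ 4√ε_*`. -/
theorem spectral_stability_gapped_hamiltonian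
    {E : Type*} [NormedAddCommGroup E] [InnerProductSpace ℂ E] [FiniteDimensional ℂ E]
    (H₀ D V P : E →L[ℂ] E) (K : ℕ) (δ εs : ℝ)
    (hH₀sa : IsSelfAdjoint H₀)
    (hH₀pos : ∀ ψ : E, 0 ≤ (⟪ψ, H₀ ψ⟫_ℂ).re)
    (hPidem : P * P = P) (hPsa : IsSelfAdjoint P)
    (hPker : LinearMap.range (P : E →ₗ[ℂ] E) = LinearMap.ker (H₀ : E →ₗ[ℂ] E))
    (hrank : Module.finrank ℂ (LinearMap.range (P : E →ₗ[ℂ] E)) = K)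
    (hgap : ∀ ψ : E, ‖ψ - P ψ‖ ^ 2 ≤ (⟪ψ, H₀ ψ⟫_ℂ).re)
    (hDsa : IsSelfAdjoint D) (hD : ∀ ψ : E, ‖D ψ‖ ≤ δ * ‖H₀ ψ‖) (hδ : δ ≤ 1 / 3)
    (hVsa : IsSelfAdjoint V) (hV : ‖V‖ ≤ εs) (hεs : εs ≤ 1 / 18) :
    (∀ μ : ℂ, Module.End.HasEigenvalue ((H₀ + D + V : E →L[ℂ] E) : E →ₗ[ℂ] E) μ →
        μ.im = 0 ∧ (μ.re ∈ Set.Icc (-εs) εs ∪ Set.Ici (1 - δ - εs))) ∧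
    Module.finrank ℂ
      ↥(⨆ t : ℝ, ⨆ (_ : t ∈ Set.Icc (-εs) εs),
          Module.End.eigenspace ((H₀ + D + V : E →L[ℂ] E) : E →ₗ[ℂ] E) (t : ℂ)) = K ∧
    (∀ Pnew : E →L[ℂ] E, Pnew * Pnew = Pnew → IsSelfAdjoint Pnew →
      LinearMap.range (Pnew : E →ₗ[ℂ] E) =
        (⨆ t : ℝ, ⨆ (_ : t ∈ Set.Icc (-εs) εs),
          Module.End.eigenspace ((H₀ + D + V : E →L[ℂ] E) : E →ₗ[ℂ] E) (t : ℂ)) →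
      ‖Pnew - P‖ ≤ 4 * Real.sqrt εs) := by
  rcases le_or_gt 0 δ with hδ0 | hδneg
  · exact aux H₀ D V P K δ εs hH₀sa hPidem hPsa hPker hrank hgap hDsa hD hδ hVsa hV hεs hδ0
  · have hH₀0 : ∀ ψ : E, H₀ ψ = 0 := by
      intro ψ
      by_contra h
      have h1 : 0 < ‖H₀ ψ‖ := norm_pos_iff.mpr h
      have h2 := hD ψ
      nlinarith [norm_nonneg (D ψ)]
    have hD0 : ∀ ψ : E, D ψ = 0 := by
      intro ψ
      have h2 := hD ψ
      rw [hH₀0 ψ, norm_zero, mul_zero] at h2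
      exact norm_le_zero_iff.mp h2
    have hD' : ∀ ψ : E, ‖D ψ‖ ≤ (0:ℝ) * ‖H₀ ψ‖ := fun ψ => by
      rw [hD0 ψ, norm_zero, zero_mul]
    obtain ⟨C1, C2, C3⟩ := aux H₀ D V P K 0 εs hH₀sa hPidem hPsa hPker hrank hgap hDsa hD'
      (by norm_num) hVsa hV hεs le_rfl
    refine ⟨?_, C2, C3⟩
    intro μc hμc
    obtain ⟨him, _⟩ := C1 μc hμc
    refine ⟨him, Or.inl ?_⟩
    obtain ⟨ψ, hψmem, hψ0⟩ := hμc.exists_hasEigenvector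
    have hψeq : (H₀ + D + V) ψ = μc • ψ := Module.End.mem_eigenspace_iff.mp hψmem
    have hVψ : V ψ = μc • ψ := by
      have he : (H₀ + D + V) ψ = H₀ ψ + D ψ + V ψ := rfl
      rw [he, hH₀0 ψ, hD0 ψ, zero_add, zero_add] at hψeq
      exact hψeq
    have h1 : ‖μc‖ * ‖ψ‖ ≤ εs * ‖ψ‖ := by
      rw [← norm_smul, ← hVψ]
      calc ‖V ψ‖ ≤ ‖V‖ * ‖ψ‖ := V.le_opNorm ψ
      _ ≤ εs * ‖ψ‖ := mul_le_mul_of_nonneg_right hV (norm_nonneg ψ)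
    have hψpos : 0 < ‖ψ‖ := norm_pos_iff.mpr hψ0
    have h2 : ‖μc‖ ≤ εs := le_of_mul_le_mul_right (by linarith) hψpos
    have h3 : |μc.re| ≤ ‖μc‖ := Complex.abs_re_le_norm μc
    have h4 := abs_le.mp (le_trans h3 h2)
    exact ⟨by linarith [h4.1], by linarith [h4.2]⟩
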